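/- arXiv:2210.16303 — 2 statements merged into one kernel-verified Lean document; each statement's English description precedes it below -/
import Mathlib

section
/- Let K be an m×n real matrix with operator norm ‖K‖ ≤ k and let p > 0. Then the (n+m)×(n+m) block matrix [[Iₙ, Kᵀ], [K, KKᵀ + p·Iₘ]] is positive semidefinite and satisfies [[Iₙ, Kᵀ], [K, KKᵀ + p·Iₘ]] ⪰ (1/((1+k²)/p + 1)) · I_{n+m}. -/
open Matrix

/-- The spectral (operator 2-) norm of a real matrix. -/
noncomputable def opNorm {m n : ℕ} (K : Matrix (Fin m) (Fin n) ℝ) : ℝ :=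
  ‖LinearMap.toContinuousLinearMap (Matrix.toEuclideanLin K)‖

lemma psd_smul {N : ℕ} {M : Matrix (Fin N) (Fin N) ℝ} (hM : M.PosSemidef) {a : ℝ} (ha : 0 ≤ a) :
    (a • M).PosSemidef := by
  rw [posSemidef_iff_dotProduct_mulVec]
  constructor
  · unfold Matrix.IsHermitian
    rw [conjTranspose_smul, hM.1]
    simp
  · intro x
    rw [smul_mulVec, dotProduct_smul]
    exact mul_nonneg ha (hM.dotProduct_mulVec_nonneg x)

lemma dot_self_nonneg {N : ℕ} (w : Fin N → ℝ) : 0 ≤ w ⬝ᵥ w :=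
  Finset.sum_nonneg fun i _ => mul_self_nonneg _

lemma mulVec_dot_le {m n : ℕ} (K : Matrix (Fin m) (Fin n) ℝ) {k : ℝ} (hK : opNorm K ≤ k)
    (v : Fin n → ℝ) : (K *ᵥ v) ⬝ᵥ (K *ᵥ v) ≤ k ^ 2 * (v ⬝ᵥ v) := by
  set g := LinearMap.toContinuousLinearMap (Matrix.toEuclideanLin K) with hg
  set v' : EuclideanSpace ℝ (Fin n) := (WithLp.equiv 2 _).symm v with hv'
  have hdot : ∀ {N : ℕ} (w : Fin N → ℝ),
      w ⬝ᵥ w = ‖((WithLp.equiv 2 (Fin N → ℝ)).symm w : EuclideanSpace ℝ (Fin N))‖ ^ 2 := by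
    intro N w
    rw [EuclideanSpace.norm_eq, Real.sq_sqrt (Finset.sum_nonneg fun i _ => sq_nonneg _)]
    simp [dotProduct, pow_two]
  have hgv : g v' = ((WithLp.equiv 2 (Fin m → ℝ)).symm (K *ᵥ v) : EuclideanSpace ℝ (Fin m)) := by
    simp only [hg, hv', LinearMap.coe_toContinuousLinearMap',
      Matrix.toLin'_apply]
    rfl
  have h1 : ‖g v'‖ ≤ k * ‖v'‖ :=
    le_trans (g.le_opNorm v') (mul_le_mul_of_nonneg_right hK (norm_nonneg _))
  calc (K *ᵥ v) ⬝ᵥ (K *ᵥ v) = ‖g v'‖ ^ 2 := by rw [hdot, hgv]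
    _ ≤ (k * ‖v'‖) ^ 2 := pow_le_pow_left₀ (norm_nonneg _) h1 2
    _ = k ^ 2 * (v ⬝ᵥ v) := by rw [mul_pow, hdot v]

lemma sub_psd {m n : ℕ} (K : Matrix (Fin m) (Fin n) ℝ) {k : ℝ} (hK : opNorm K ≤ k) :
    (k ^ 2 • (1 : Matrix (Fin m) (Fin m) ℝ) - K * Kᵀ).PosSemidef := by
  rw [posSemidef_iff_dotProduct_mulVec]
  constructor
  · unfold Matrix.IsHermitian
    rw [conjTranspose_sub, conjTranspose_smul, conjTranspose_one, conjTranspose_mul,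
      conjTranspose_eq_transpose_of_trivial, conjTranspose_eq_transpose_of_trivial,
      transpose_transpose]
    simp
  · intro x
    have hx : star x = x := by simp
    have key : (Kᵀ *ᵥ x) ⬝ᵥ (Kᵀ *ᵥ x) ≤ k ^ 2 * (x ⬝ᵥ x) := by
      set a := Kᵀ *ᵥ x with ha
      have h1 : x ⬝ᵥ (K *ᵥ a) = a ⬝ᵥ a := by
        rw [dotProduct_mulVec, ← mulVec_transpose]
      have hcs : (x ⬝ᵥ (K *ᵥ a)) ^ 2 ≤ (x ⬝ᵥ x) * ((K *ᵥ a) ⬝ᵥ (K *ᵥ a)) := by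
        have := Finset.sum_mul_sq_le_sq_mul_sq Finset.univ x (K *ᵥ a)
        simpa [dotProduct, pow_two] using this
      have h2 := mulVec_dot_le K hK a
      have h3 : 0 ≤ a ⬝ᵥ a := dot_self_nonneg a
      have h4 : 0 ≤ x ⬝ᵥ x := dot_self_nonneg x
      rw [h1] at hcs
      rcases h3.lt_or_eq with hpos | hzero
      · nlinarith [mul_le_mul_of_nonneg_left h2 h4]
      · rw [← hzero]
        positivity
    rw [hx, sub_mulVec, dotProduct_sub, smul_mulVec, one_mulVec, dotProduct_smul]
    have hrw : x ⬝ᵥ ((K * Kᵀ) *ᵥ x) = (Kᵀ *ᵥ x) ⬝ᵥ (Kᵀ *ᵥ x) := by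
      rw [← mulVec_mulVec, dotProduct_mulVec, ← mulVec_transpose]
    rw [hrw]
    simp only [smul_eq_mul]
    linarith

theorem stmt0 {m n : ℕ} (K : Matrix (Fin m) (Fin n) ℝ) (k p : ℝ)
    (hK : opNorm K ≤ k) (hp : 0 < p) :
    (Matrix.fromBlocks (1 : Matrix (Fin n) (Fin n) ℝ) Kᵀ K (K * Kᵀ + p • 1)).PosSemidef ∧
    (Matrix.fromBlocks (1 : Matrix (Fin n) (Fin n) ℝ) Kᵀ K (K * Kᵀ + p • 1)
      - (1 / ((1 + k ^ 2) / p + 1)) • 1).PosSemidef := by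
  have hk0 : 0 ≤ k := le_trans (norm_nonneg _) hK
  set c : ℝ := 1 / ((1 + k ^ 2) / p + 1) with hc
  have hS : 0 < 1 + k ^ 2 + p := by positivity
  have hceq : c = p / (1 + k ^ 2 + p) := by
    rw [hc]
    field_simp
  have hc0 : 0 < c := by rw [hceq]; positivity
  have hc1 : c < 1 := by
    rw [hceq, div_lt_one hS]
    nlinarith [sq_nonneg k]
  have h1c : 0 < 1 - c := by linarith
  have hherm : (Kᵀ)ᴴ = K := by
    rw [conjTranspose_eq_transpose_of_trivial, transpose_transpose]
  haveI : Invertible (1 : Matrix (Fin n) (Fin n) ℝ) := invertibleOne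
  constructor
  · rw [show (fromBlocks (1 : Matrix (Fin n) (Fin n) ℝ) Kᵀ K (K * Kᵀ + p • 1))
        = fromBlocks 1 Kᵀ (Kᵀ)ᴴ (K * Kᵀ + p • 1) from by rw [hherm]]
    rw [Matrix.PosDef.fromBlocks₁₁ _ _ Matrix.PosDef.one]
    have : K * Kᵀ + p • 1 - (Kᵀ)ᴴ * (1 : Matrix (Fin n) (Fin n) ℝ)⁻¹ * Kᵀ
        = p • (1 : Matrix (Fin m) (Fin m) ℝ) := by
      rw [hherm, inv_one, Matrix.mul_one, add_sub_cancel_left]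
    rw [this]
    exact psd_smul Matrix.PosSemidef.one hp.le
  · haveI : Invertible ((1 - c) • (1 : Matrix (Fin n) (Fin n) ℝ)) :=
      ⟨(1 - c)⁻¹ • 1, by
        rw [Matrix.smul_mul, Matrix.mul_smul, one_mul, smul_smul,
          inv_mul_cancel₀ h1c.ne', one_smul], by
        rw [Matrix.smul_mul, Matrix.mul_smul, one_mul, smul_smul,
          mul_inv_cancel₀ h1c.ne', one_smul]⟩
    have hAinv : ((1 - c) • (1 : Matrix (Fin n) (Fin n) ℝ))⁻¹ = (1 - c)⁻¹ • 1 := by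
      rw [← Matrix.invOf_eq_nonsing_inv]
      exact invOf_eq_right_inv (by
        rw [Matrix.smul_mul, Matrix.mul_smul, one_mul, smul_smul,
          mul_inv_cancel₀ h1c.ne', one_smul])
    have hApos : ((1 - c) • (1 : Matrix (Fin n) (Fin n) ℝ)).PosDef := by
      rw [smul_one_eq_diagonal]
      exact Matrix.PosDef.diagonal fun _ => h1c
    have hblock : fromBlocks (1 : Matrix (Fin n) (Fin n) ℝ) Kᵀ K (K * Kᵀ + p • 1) - c • 1
        = fromBlocks ((1 - c) • 1) Kᵀ (Kᵀ)ᴴ (K * Kᵀ + (p - c) • 1) := by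
      rw [hherm, ← fromBlocks_one, fromBlocks_smul, sub_eq_add_neg, fromBlocks_neg,
        fromBlocks_add]
      congr 1 <;> simp [sub_smul, sub_eq_add_neg, add_assoc] <;> module
    rw [hblock, Matrix.PosDef.fromBlocks₁₁ _ _ hApos, hAinv, hherm]
    have hmul : K * ((1 - c)⁻¹ • (1 : Matrix (Fin n) (Fin n) ℝ)) * Kᵀ = (1 - c)⁻¹ • (K * Kᵀ) := by
      rw [Matrix.mul_smul, Matrix.mul_one, Matrix.smul_mul]
    rw [hmul]
    have hco : (1 - c)⁻¹ = 1 + c / (1 - c) := by field_simp; ring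
    have heq : K * Kᵀ + (p - c) • 1 - (1 - c)⁻¹ • (K * Kᵀ)
        = (c / (1 - c)) • (k ^ 2 • (1 : Matrix (Fin m) (Fin m) ℝ) - K * Kᵀ)
          + ((p - c) - (c / (1 - c)) * k ^ 2) • 1 := by
      rw [hco]
      module
    rw [heq]
    apply Matrix.PosSemidef.add
    · exact psd_smul (sub_psd K hK) (by positivity)
    · apply psd_smul Matrix.PosSemidef.one
      have key : (p - c) * (1 - c) - c * k ^ 2 = p ^ 2 / (1 + k ^ 2 + p) ^ 2 := by
        rw [hceq]
        field_simp
        ring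
      rw [sub_nonneg, div_mul_eq_mul_div, div_le_iff₀ h1c]
      have hpos : 0 ≤ p ^ 2 / (1 + k ^ 2 + p) ^ 2 := by positivity
      linarith [key]
end

section
/- Let X₁ = [[A₁, B₁], [B₁ᵀ, C₁]] and X₂ = [[A₂, B₂], [B₂ᵀ, C₂]] be symmetric positive definite block matrices with A₁, A₂ square of the same size. If X₁ − X₂ is positive semidefinite, then the Schur complements satisfy (C₁ − B₁ᵀ A₁⁻¹ B₁) − (C₂ − B₂ᵀ A₂⁻¹ B₂) ⪰ 0. -/
open Matrix

lemma posDef_fromBlocks_left {n m : ℕ} {A : Matrix (Fin n) (Fin n) ℝ}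
    {B : Matrix (Fin n) (Fin m) ℝ} {C : Matrix (Fin m) (Fin m) ℝ}
    (h : (Matrix.fromBlocks A B Bᵀ C).PosDef) : A.PosDef := by
  refine posDef_iff_dotProduct_mulVec.mpr ⟨?_, ?_⟩
  · exact (Matrix.isHermitian_fromBlocks_iff.mp h.1).1
  · intro x hx
    have hx' : (Sum.elim x (0 : Fin m → ℝ)) ≠ 0 := by
      intro hc
      apply hx
      ext i
      simpa using congrFun hc (Sum.inl i)
    have := h.dotProduct_mulVec_pos hx'
    simpa [fromBlocks_mulVec, dotProduct, Fintype.sum_sum_type] using this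

theorem stmt3 {n m : ℕ}
    (A₁ A₂ : Matrix (Fin n) (Fin n) ℝ) (B₁ B₂ : Matrix (Fin n) (Fin m) ℝ)
    (C₁ C₂ : Matrix (Fin m) (Fin m) ℝ)
    (h₁ : (Matrix.fromBlocks A₁ B₁ B₁ᵀ C₁).PosDef)
    (h₂ : (Matrix.fromBlocks A₂ B₂ B₂ᵀ C₂).PosDef)
    (h : (Matrix.fromBlocks A₁ B₁ B₁ᵀ C₁ - Matrix.fromBlocks A₂ B₂ B₂ᵀ C₂).PosSemidef) :
    ((C₁ - B₁ᵀ * A₁⁻¹ * B₁) - (C₂ - B₂ᵀ * A₂⁻¹ * B₂)).PosSemidef := by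
  have hA₁ := posDef_fromBlocks_left h₁
  have hA₂ := posDef_fromBlocks_left h₂
  haveI := hA₁.isUnit.invertible
  haveI := hA₂.isUnit.invertible
  have e₁ : B₁ᴴ = B₁ᵀ := Matrix.conjTranspose_eq_transpose_of_trivial _
  have e₂ : B₂ᴴ = B₂ᵀ := Matrix.conjTranspose_eq_transpose_of_trivial _
  have hS₁ : (C₁ - B₁ᵀ * A₁⁻¹ * B₁).IsHermitian := by
    rw [← e₁]
    exact (Matrix.IsHermitian.fromBlocks₁₁ _ _ hA₁.1).mp (by rw [e₁]; exact h₁.1)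
  have hS₂ : (C₂ - B₂ᵀ * A₂⁻¹ * B₂).IsHermitian := by
    rw [← e₂]
    exact (Matrix.IsHermitian.fromBlocks₁₁ _ _ hA₂.1).mp (by rw [e₂]; exact h₂.1)
  refine posSemidef_iff_dotProduct_mulVec.mpr ⟨hS₁.sub hS₂, fun x => ?_⟩
  set y : Fin n → ℝ := -((A₁⁻¹ * B₁) *ᵥ x) with hy
  have q₁ := Matrix.schur_complement_eq₁₁ (A := A₁) B₁ C₁ y x hA₁.1
  have q₂ := Matrix.schur_complement_eq₁₁ (A := A₂) B₂ C₂ y x hA₂.1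
  rw [e₁] at q₁
  rw [e₂] at q₂
  have hy0 : y + (A₁⁻¹ * B₁) *ᵥ x = 0 := by simp [hy]
  rw [hy0] at q₁
  simp only [star_trivial] at q₁ q₂
  have ht₂ : 0 ≤ (y + (A₂⁻¹ * B₂) *ᵥ x) ᵥ* A₂ ⬝ᵥ (y + (A₂⁻¹ * B₂) *ᵥ x) := by
    rw [← dotProduct_mulVec]
    simpa using hA₂.posSemidef.dotProduct_mulVec_nonneg (y + (A₂⁻¹ * B₂) *ᵥ x)
  have hsub := h.dotProduct_mulVec_nonneg (Sum.elim y x)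
  rw [sub_mulVec, dotProduct_sub] at hsub
  simp only [star_trivial] at hsub
  rw [dotProduct_mulVec, dotProduct_mulVec] at hsub
  rw [sub_mulVec, dotProduct_sub]
  simp only [star_trivial]
  rw [dotProduct_mulVec, dotProduct_mulVec]
  simp only [Matrix.zero_vecMul, zero_dotProduct, zero_add] at q₁
  linarith [q₁, q₂, ht₂, hsub]
end
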